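/- Let q = 2^n, and let α, α' ∈ F_q* be distinct. The image of the map T_{α,α'} : F_q → F_q, x ↦ x(x+α)(x+α')(x+α+α'), equals the intersection of the kernels of the two F_2-linear maps x ↦ Tr_{F_q/F_2}(x/(α²+αα')²) and x ↦ Tr_{F_q/F_2}(x/(α'²+αα')²). In particular, this image is an F_2-subspace of F_q of codimension 2. -/

import Mathlib

open Algebra

section aux
variable {F : Type*} [Field F] [Algebra (ZMod 2) F]

lemma aux_char2 : (2 : F) = 0 := by
  have h : algebraMap (ZMod 2) F (2 : ZMod 2) = (2 : F) := map_ofNat _ 2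
  have h2 : (2 : ZMod 2) = 0 := by decide
  rw [← h, h2, map_zero]

/-- The Artin–Schreier additive map `u ↦ u² + u`. -/
def asHom (F : Type*) [Field F] [Algebra (ZMod 2) F] : F →+ F where
  toFun := fun u => u ^ 2 + u
  map_zero' := by ring
  map_add' := by
    intro u v
    have h2 := aux_char2 (F := F)
    linear_combination u * v * h2

/-- The pair of trace functionals `z ↦ (Tr(z/a), Tr(z/b))`. -/
noncomputable def trPair (F : Type*) [Field F] [Algebra (ZMod 2) F] (a b : F) :
    F →+ ZMod 2 × ZMod 2 where
  toFun := fun z => (Algebra.trace (ZMod 2) F (z / a), Algebra.trace (ZMod 2) F (z / b))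
  map_zero' := by simp
  map_add' := by intro z w; simp [add_div, Prod.ext_iff]

end aux

section aux2
variable {F : Type*} [Field F] [Fintype F] [Algebra (ZMod 2) F]

lemma aux_tr_sq (u : F) :
    Algebra.trace (ZMod 2) F (u ^ 2) = Algebra.trace (ZMod 2) F u := by
  haveI : CharP F 2 := charP_of_injective_algebraMap (algebraMap (ZMod 2) F).injective 2
  let φ : F →ₐ[ZMod 2] F :=
    { toRingHom := frobenius F 2
      commutes' := by
        intro c
        have hc : c ^ 2 = c := by revert c; decide
        simp [frobenius_def, ← map_pow, hc] }
  have hbij : Function.Bijective φ :=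
    (Finite.injective_iff_bijective).mp (φ.toRingHom.injective)
  let e : F ≃ₐ[ZMod 2] F := AlgEquiv.ofBijective φ hbij
  have := Algebra.trace_eq_of_algEquiv e u
  simpa [e, φ, frobenius_def] using this

/-- Additive Hilbert 90 / Artin–Schreier: `Tr v = 0` iff `v = u² + u` for some `u`. -/
lemma aux_AS (v : F) :
    Algebra.trace (ZMod 2) F v = 0 ↔ ∃ u : F, u ^ 2 + u = v := by
  classical
  haveI : FiniteDimensional (ZMod 2) F := Module.Finite.of_finite
  set ψ := asHom F with hψ
  set TrH : F →+ ZMod 2 := (Algebra.trace (ZMod 2) F).toAddMonoidHom with hTrH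
  have hrange_le : (ψ.range : Set F) ⊆ (TrH.ker : Set F) := by
    rintro _ ⟨u, rfl⟩
    have h : TrH (ψ u) = 0 := by
      show Algebra.trace (ZMod 2) F (u ^ 2 + u) = 0
      rw [map_add, aux_tr_sq]
      exact CharTwo.add_self_eq_zero _
    simpa [AddMonoidHom.mem_ker] using h
  have hkerψ : (ψ.ker : Set F) = {0, 1} := by
    ext u
    simp only [AddMonoidHom.mem_ker, SetLike.mem_coe, Set.mem_insert_iff, Set.mem_singleton_iff]
    constructor
    · intro h
      have h' : u * (u + 1) = 0 := by
        calc u * (u + 1) = u ^ 2 + u := by ring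
          _ = 0 := h
      rcases mul_eq_zero.mp h' with h0 | h1
      · exact Or.inl h0
      · right
        have h2 := aux_char2 (F := F)
        linear_combination h1 - h2
    · rintro (rfl | rfl)
      · show (0:F) ^ 2 + 0 = 0; ring
      · show (1:F) ^ 2 + 1 = 0
        have h2 := aux_char2 (F := F)
        linear_combination h2
  have hcardkerψ : Nat.card ψ.ker = 2 := by
    have h1 : Nat.card ψ.ker = Nat.card ({0, 1} : Set F) :=
      Nat.card_congr (Equiv.setCongr hkerψ)
    rw [h1, Nat.card_coe_set_eq, Set.ncard_pair zero_ne_one]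
  have hq1 : Nat.card F = Nat.card ψ.range * Nat.card ψ.ker := by
    rw [AddSubgroup.card_eq_card_quotient_mul_card_addSubgroup ψ.ker]
    congr 1
    exact Nat.card_congr (QuotientAddGroup.quotientKerEquivRange ψ).toEquiv
  have htrsurj : Function.Surjective TrH := Algebra.trace_surjective (ZMod 2) F
  have hq2 : Nat.card F = 2 * Nat.card TrH.ker := by
    rw [AddSubgroup.card_eq_card_quotient_mul_card_addSubgroup TrH.ker]
    congr 1
    rw [Nat.card_congr (QuotientAddGroup.quotientKerEquivRange TrH).toEquiv]
    rw [AddMonoidHom.range_eq_top.mpr htrsurj, AddSubgroup.card_top, Nat.card_zmod]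
  have hcards : Nat.card TrH.ker = Nat.card ψ.range := by
    rw [hcardkerψ] at hq1
    omega
  have hrange_eq : (ψ.range : Set F) = (TrH.ker : Set F) := by
    apply Set.eq_of_subset_of_ncard_le hrange_le _ (Set.toFinite _)
    rw [← Nat.card_coe_set_eq, ← Nat.card_coe_set_eq]
    exact le_of_eq hcards
  constructor
  · intro h
    have hv : v ∈ (TrH.ker : Set F) := by exact h
    rw [← hrange_eq] at hv
    obtain ⟨u, hu⟩ := hv
    exact ⟨u, hu⟩
  · rintro ⟨u, rfl⟩
    have hm : ψ u ∈ (ψ.range : Set F) := ⟨u, rfl⟩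
    rw [hrange_eq] at hm
    have h : TrH (ψ u) = 0 := by simpa [AddMonoidHom.mem_ker] using hm
    exact h

end aux2

/-- For distinct `α, α' ∈ 𝔽_q*`, the image of `T_{α,α'}(x) = x(x+α)(x+α')(x+α+α')`
is the intersection of the kernels of `x ↦ Tr(x/(α²+αα')²)` and `x ↦ Tr(x/(α'²+αα')²)`;
in particular it is an `𝔽₂`-subspace of codimension 2, i.e. of cardinality `2^(n-2)`. -/
theorem stmt12 (n : ℕ) (hn : 2 ≤ n) (F : Type*) [Field F] [Fintype F] [Algebra (ZMod 2) F]
    (hF : Fintype.card F = 2 ^ n)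
    (α α' : F) (hα : α ≠ 0) (hα' : α' ≠ 0) (hne : α ≠ α') :
    Set.range (fun x : F => x * (x + α) * (x + α') * (x + α + α')) =
      {z : F | Algebra.trace (ZMod 2) F (z / (α ^ 2 + α * α') ^ 2) = 0 ∧
               Algebra.trace (ZMod 2) F (z / (α' ^ 2 + α * α') ^ 2) = 0} ∧
    Nat.card (Set.range (fun x : F => x * (x + α) * (x + α') * (x + α + α'))) =
      2 ^ (n - 2) := by
  classical
  have h2 := aux_char2 (F := F)
  have hs : α + α' ≠ 0 := by
    intro h
    apply hne
    linear_combination h - α' * h2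
  have ha0 : α ^ 2 + α * α' ≠ 0 := by
    have e : α ^ 2 + α * α' = α * (α + α') := by ring
    rw [e]; exact mul_ne_zero hα hs
  have hb0 : α' ^ 2 + α * α' ≠ 0 := by
    have e : α' ^ 2 + α * α' = α' * (α + α') := by ring
    rw [e]; exact mul_ne_zero hα' hs
  have hmain : Set.range (fun x : F => x * (x + α) * (x + α') * (x + α + α')) =
      {z : F | Algebra.trace (ZMod 2) F (z / (α ^ 2 + α * α') ^ 2) = 0 ∧
               Algebra.trace (ZMod 2) F (z / (α' ^ 2 + α * α') ^ 2) = 0} := by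
    ext z
    simp only [Set.mem_range, Set.mem_setOf_eq]
    constructor
    · rintro ⟨x, rfl⟩
      constructor
      · have hw : x * (x + α) * (x + α') * (x + α + α') =
            (x ^ 2 + α' * x) ^ 2 + (α ^ 2 + α * α') * (x ^ 2 + α' * x) := by
          linear_combination (α * x ^ 2 * (x + α')) * h2
        have hdiv : (x * (x + α) * (x + α') * (x + α + α')) / (α ^ 2 + α * α') ^ 2 =
            ((x ^ 2 + α' * x) / (α ^ 2 + α * α')) ^ 2 +
              (x ^ 2 + α' * x) / (α ^ 2 + α * α') := by
          rw [hw]; field_simp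
        rw [hdiv, map_add, aux_tr_sq]
        exact CharTwo.add_self_eq_zero _
      · have hw : x * (x + α) * (x + α') * (x + α + α') =
            (x ^ 2 + α * x) ^ 2 + (α' ^ 2 + α * α') * (x ^ 2 + α * x) := by
          linear_combination (α' * x ^ 2 * (x + α)) * h2
        have hdiv : (x * (x + α) * (x + α') * (x + α + α')) / (α' ^ 2 + α * α') ^ 2 =
            ((x ^ 2 + α * x) / (α' ^ 2 + α * α')) ^ 2 +
              (x ^ 2 + α * x) / (α' ^ 2 + α * α') := by
          rw [hw]; field_simp
        rw [hdiv, map_add, aux_tr_sq]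
        exact CharTwo.add_self_eq_zero _
    · rintro ⟨h1, hb2⟩
      obtain ⟨u, hu⟩ := (aux_AS _).mp hb2
      have hz' : ((α' ^ 2 + α * α') * u) ^ 2 +
          (α' ^ 2 + α * α') * ((α' ^ 2 + α * α') * u) = z := by
        have hu' : (α' ^ 2 + α * α') ^ 2 * (u ^ 2 + u) = z := by
          rw [hu]; field_simp; exact mul_div_cancel_left₀ z (by rwa [add_comm] at hs)
        linear_combination hu'
      have hkey : z / (α ^ 2 + α * α') ^ 2 =
          (((α' ^ 2 + α * α') * u) / (α ^ 2 + α * α')) ^ 2 +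
            ((α' ^ 2 + α * α') * u) / (α ^ 2 + α * α') +
            ((α' ^ 2 + α * α') * u) / α ^ 2 := by
        rw [← hz']
        field_simp
        linear_combination (-(α * (α' + α) ^ 2 * u)) * h2
      have htry : Algebra.trace (ZMod 2) F (((α' ^ 2 + α * α') * u) / α ^ 2) = 0 := by
        rw [hkey, map_add, map_add, aux_tr_sq] at h1
        rwa [CharTwo.add_self_eq_zero, zero_add] at h1
      obtain ⟨v, hv⟩ := (aux_AS _).mp htry
      refine ⟨α * v, ?_⟩
      show (α * v) * ((α * v) + α) * ((α * v) + α') * ((α * v) + α + α') = z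
      have hxv : (α * v) ^ 2 + α * (α * v) = (α' ^ 2 + α * α') * u := by
        have h' : α ^ 2 * (v ^ 2 + v) = (α' ^ 2 + α * α') * u := by
          rw [hv]; field_simp
        linear_combination h'
      have hT : (α * v) * ((α * v) + α) * ((α * v) + α') * ((α * v) + α + α') =
          ((α * v) ^ 2 + α * (α * v)) ^ 2 +
            (α' ^ 2 + α * α') * ((α * v) ^ 2 + α * (α * v)) := by
        linear_combination (α' * (α * v) ^ 2 * ((α * v) + α)) * h2
      rw [hT, hxv]
      exact hz'
  refine ⟨hmain, ?_⟩
  haveI : FiniteDimensional (ZMod 2) F := Module.Finite.of_finite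
  set φ := trPair F ((α ^ 2 + α * α') ^ 2) ((α' ^ 2 + α * α') ^ 2) with hφ
  have hSker : ({z : F | Algebra.trace (ZMod 2) F (z / (α ^ 2 + α * α') ^ 2) = 0 ∧
      Algebra.trace (ZMod 2) F (z / (α' ^ 2 + α * α') ^ 2) = 0} : Set F) = (φ.ker : Set F) := by
    ext z
    simp [AddMonoidHom.mem_ker, hφ, trPair, Prod.ext_iff]
  obtain ⟨t, ht⟩ := Algebra.trace_surjective (ZMod 2) F 1
  have hz1 : (φ ((α ^ 2 + α * α') ^ 2 * t)).1 = 1 := by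
    show Algebra.trace (ZMod 2) F (((α ^ 2 + α * α') ^ 2 * t) / (α ^ 2 + α * α') ^ 2) = 1
    rw [mul_div_cancel_left₀ _ (pow_ne_zero 2 ha0)]
    exact ht
  have hz2 : (φ ((α' ^ 2 + α * α') ^ 2 * t)).2 = 1 := by
    show Algebra.trace (ZMod 2) F (((α' ^ 2 + α * α') ^ 2 * t) / (α' ^ 2 + α * α') ^ 2) = 1
    rw [mul_div_cancel_left₀ _ (pow_ne_zero 2 hb0)]
    exact ht
  have hsne : 1 / (α ^ 2 + α * α') ^ 2 + 1 / (α' ^ 2 + α * α') ^ 2 ≠ 0 := by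
    intro hcon
    have hmul : (α' ^ 2 + α * α') ^ 2 + (α ^ 2 + α * α') ^ 2 = 0 := by
      rw [div_add_div _ _ (pow_ne_zero 2 ha0) (pow_ne_zero 2 hb0), div_eq_zero_iff] at hcon
      rcases hcon with hcon | hcon
      · linear_combination hcon
      · exact absurd hcon (mul_ne_zero (pow_ne_zero 2 ha0) (pow_ne_zero 2 hb0))
    have h4 : ((α + α') ^ 2) ^ 2 = 0 := by
      linear_combination hmul + (α * α' * (α + α') ^ 2) * h2
    exact hs (pow_eq_zero_iff two_ne_zero |>.mp (pow_eq_zero_iff two_ne_zero |>.mp h4))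
  set s := 1 / (α ^ 2 + α * α') ^ 2 + 1 / (α' ^ 2 + α * α') ^ 2 with hs_def
  have hz3 : (φ (t / s)).1 + (φ (t / s)).2 = 1 := by
    show Algebra.trace (ZMod 2) F ((t / s) / (α ^ 2 + α * α') ^ 2) +
      Algebra.trace (ZMod 2) F ((t / s) / (α' ^ 2 + α * α') ^ 2) = 1
    rw [← map_add]
    have e1 : (t / s) / (α ^ 2 + α * α') ^ 2 + (t / s) / (α' ^ 2 + α * α') ^ 2
        = (t / s) * s := by
      rw [hs_def]; ring
    rw [e1, div_mul_cancel₀ _ hsne]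
    exact ht
  have two : ∀ c : ZMod 2, c = 0 ∨ c = 1 := by decide
  have hAB : (∃ z, φ z = ((1 : ZMod 2), (0 : ZMod 2))) ∧
      (∃ z, φ z = ((0 : ZMod 2), (1 : ZMod 2))) := by
    rcases two (φ (t / s)).2 with h3 | h3
    · have h1' : (φ (t / s)).1 = 1 := by rw [h3, add_zero] at hz3; exact hz3
      have hr : φ (t / s) = (1, 0) := Prod.ext h1' h3
      refine ⟨⟨t / s, hr⟩, ?_⟩
      rcases two (φ ((α' ^ 2 + α * α') ^ 2 * t)).1 with h4 | h4
      · exact ⟨_, Prod.ext h4 hz2⟩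
      · have hq : φ ((α' ^ 2 + α * α') ^ 2 * t) = (1, 1) := Prod.ext h4 hz2
        refine ⟨(α' ^ 2 + α * α') ^ 2 * t + t / s, ?_⟩
        rw [map_add, hq, hr]
        decide
    · have h1' : (φ (t / s)).1 = 0 := by
        rcases two (φ (t / s)).1 with h | h
        · exact h
        · rw [h, h3] at hz3
          exact absurd hz3 (by decide)
      have hr : φ (t / s) = (0, 1) := Prod.ext h1' h3
      refine ⟨?_, ⟨t / s, hr⟩⟩
      rcases two (φ ((α ^ 2 + α * α') ^ 2 * t)).2 with h4 | h4
      · exact ⟨_, Prod.ext hz1 h4⟩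
      · have hq : φ ((α ^ 2 + α * α') ^ 2 * t) = (1, 1) := Prod.ext hz1 h4
        refine ⟨(α ^ 2 + α * α') ^ 2 * t + t / s, ?_⟩
        rw [map_add, hq, hr]
        decide
  obtain ⟨⟨zA, hzA⟩, ⟨zB, hzB⟩⟩ := hAB
  have hsurj : Function.Surjective φ := by
    intro c
    obtain ⟨c1, c2⟩ := c
    rcases two c1 with rfl | rfl <;> rcases two c2 with rfl | rfl
    · exact ⟨0, by rw [map_zero]; rfl⟩
    · exact ⟨zB, hzB⟩
    · exact ⟨zA, hzA⟩
    · exact ⟨zA + zB, by rw [map_add, hzA, hzB]; decide⟩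
  have hq : Nat.card F = Nat.card (ZMod 2 × ZMod 2) * Nat.card φ.ker := by
    rw [AddSubgroup.card_eq_card_quotient_mul_card_addSubgroup φ.ker]
    congr 1
    rw [Nat.card_congr (QuotientAddGroup.quotientKerEquivRange φ).toEquiv,
      AddMonoidHom.range_eq_top.mpr hsurj, AddSubgroup.card_top]
  have hcard4 : Nat.card (ZMod 2 × ZMod 2) = 4 := by
    simp [Nat.card_eq_fintype_card]
  have hFn : Nat.card F = 2 ^ n := by rw [Nat.card_eq_fintype_card, hF]
  have hpow : (2 : ℕ) ^ n = 4 * 2 ^ (n - 2) := by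
    conv_lhs => rw [show n = 2 + (n - 2) by omega]
    rw [pow_add]; norm_num
  have hker : Nat.card φ.ker = 2 ^ (n - 2) := by
    rw [hcard4, hFn] at hq
    exact Nat.eq_of_mul_eq_mul_left (by norm_num) (hq.symm.trans hpow)
  rw [hmain]
  calc Nat.card {z : F | Algebra.trace (ZMod 2) F (z / (α ^ 2 + α * α') ^ 2) = 0 ∧
        Algebra.trace (ZMod 2) F (z / (α' ^ 2 + α * α') ^ 2) = 0}
      = Nat.card φ.ker := Nat.card_congr (Equiv.setCongr hSker)
    _ = 2 ^ (n - 2) := hker
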